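/- Suppose 0 < b < 1, 0 < e < 1, r ∈ [0,1], p, q ≥ 0 with p + q ≤ 1, and δ > 0. Then for every (x,y) ∈ [0,1]²: the denominators 1+s − b·a_B(x) − (1−e)·a_R(x), 1+s − e·a_R(x) − (1−b)·a_B(x), 1+s − e·a_B(y) − (1−e)·a_R(y), 1+s − b·a_R(y) − (1−b)·a_B(y), and D3(x,y) are all strictly positive; each of P1RR(x), P1BR(x), P2RR(y), P2BR(y) lies in [0,1]; P3RR(x,y) + P3BR(x,y) ∈ [0,1] and P3RR(x,y) + P3RB(x,y) ∈ [0,1]; and consequently F(x,y) ∈ [0,1]², i.e. F maps the unit square into itself. -/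

import Mathlib

noncomputable def sVal (p q δ : ℝ) : ℝ := (p + q) * δ

noncomputable def aR (r p q δ t : ℝ) : ℝ := t + r * sVal p q δ

noncomputable def aB (r p q δ t : ℝ) : ℝ := 1 - t + (1 - r) * sVal p q δ

noncomputable def P1RR (r p q b e δ x : ℝ) : ℝ :=
  e * aR r p q δ x / (1 + sVal p q δ - b * aB r p q δ x - (1 - e) * aR r p q δ x)

noncomputable def P1RB (r p q b e δ x : ℝ) : ℝ :=
  (1 - b) * aB r p q δ x / (1 + sVal p q δ - b * aB r p q δ x - (1 - e) * aR r p q δ x)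

noncomputable def P1BR (r p q b e δ x : ℝ) : ℝ :=
  (1 - e) * aR r p q δ x / (1 + sVal p q δ - e * aR r p q δ x - (1 - b) * aB r p q δ x)

noncomputable def P1BB (r p q b e δ x : ℝ) : ℝ :=
  b * aB r p q δ x / (1 + sVal p q δ - e * aR r p q δ x - (1 - b) * aB r p q δ x)

noncomputable def P2RR (r p q b e δ y : ℝ) : ℝ :=
  e * aR r p q δ y / (1 + sVal p q δ - e * aB r p q δ y - (1 - e) * aR r p q δ y)

noncomputable def P2RB (r p q b e δ y : ℝ) : ℝ :=
  (1 - e) * aB r p q δ y / (1 + sVal p q δ - e * aB r p q δ y - (1 - e) * aR r p q δ y)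

noncomputable def P2BR (r p q b e δ y : ℝ) : ℝ :=
  (1 - b) * aR r p q δ y / (1 + sVal p q δ - b * aR r p q δ y - (1 - b) * aB r p q δ y)

noncomputable def P2BB (r p q b e δ y : ℝ) : ℝ :=
  b * aB r p q δ y / (1 + sVal p q δ - b * aR r p q δ y - (1 - b) * aB r p q δ y)

noncomputable def D3 (r p q b e δ x y : ℝ) : ℝ :=
  (1 + sVal p q δ) ^ 2 - b * aR r p q δ y * aB r p q δ x - e * aR r p q δ x * aB r p q δ y
    - (1 - b) * aB r p q δ x * aB r p q δ y - (1 - e) * aR r p q δ x * aR r p q δ y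

noncomputable def P3RR (r p q b e δ x y : ℝ) : ℝ :=
  e * aR r p q δ y * aR r p q δ x / D3 r p q b e δ x y

noncomputable def P3BR (r p q b e δ x y : ℝ) : ℝ :=
  (1 - e) * aB r p q δ y * aR r p q δ x / D3 r p q b e δ x y

noncomputable def P3RB (r p q b e δ x y : ℝ) : ℝ :=
  (1 - b) * aR r p q δ y * aB r p q δ x / D3 r p q b e δ x y

noncomputable def P3BB (r p q b e δ x y : ℝ) : ℝ :=
  b * aB r p q δ y * aB r p q δ x / D3 r p q b e δ x y

noncomputable def F (r p q b e δ : ℝ) (θ : ℝ × ℝ) : ℝ × ℝ :=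
  (p * (r * P1RR r p q b e δ θ.1 + (1 - r) * P1BR r p q b e δ θ.1) + q * r
      + (1 - p - q) * (P3RR r p q b e δ θ.1 θ.2 + P3BR r p q b e δ θ.1 θ.2),
   p * r + q * (r * P2RR r p q b e δ θ.2 + (1 - r) * P2BR r p q b e δ θ.2)
      + (1 - p - q) * (P3RR r p q b e δ θ.1 θ.2 + P3RB r p q b e δ θ.1 θ.2))

noncomputable def Ci (r p q b e δ x y : ℝ) : ℝ :=
  p * r * e / (1 + sVal p q δ - b * aB r p q δ x - (1 - e) * aR r p q δ x)
    + p * (1 - r) * (1 - e) / (1 + sVal p q δ - e * aR r p q δ x - (1 - b) * aB r p q δ x)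
    + (1 - p - q) * (e * aR r p q δ y + (1 - e) * aB r p q δ y) / D3 r p q b e δ x y

noncomputable def Co (r p q b e δ x y : ℝ) : ℝ :=
  q * r * e / (1 + sVal p q δ - e * aB r p q δ y - (1 - e) * aR r p q δ y)
    + q * (1 - r) * (1 - b) / (1 + sVal p q δ - b * aR r p q δ y - (1 - b) * aB r p q δ y)
    + (1 - p - q) * (e * aR r p q δ x + (1 - b) * aB r p q δ x) / D3 r p q b e δ x y

noncomputable def CiB (r p q b e δ x y : ℝ) : ℝ := Ci (1 - r) p q e b δ (1 - x) (1 - y)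

noncomputable def CoB (r p q b e δ x y : ℝ) : ℝ := Co (1 - r) p q e b δ (1 - x) (1 - y)

lemma dmpa_aux (b e s Ax Bx Ay By : ℝ) (hb0 : 0 < b) (hb1 : b < 1) (he0 : 0 < e) (he1 : e < 1)
    (hs : 0 ≤ s)
    (hAx0 : 0 ≤ Ax) (hBx0 : 0 ≤ Bx) (hAy0 : 0 ≤ Ay) (hBy0 : 0 ≤ By)
    (hsx : Ax + Bx = 1 + s) (hsy : Ay + By = 1 + s) :
    (0 < 1 + s - b * Bx - (1 - e) * Ax) ∧
    (0 < 1 + s - e * Ax - (1 - b) * Bx) ∧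
    (0 < 1 + s - e * By - (1 - e) * Ay) ∧
    (0 < 1 + s - b * Ay - (1 - b) * By) ∧
    (0 < (1 + s) ^ 2 - b * Ay * Bx - e * Ax * By - (1 - b) * Bx * By - (1 - e) * Ax * Ay) ∧
    e * Ax / (1 + s - b * Bx - (1 - e) * Ax) ∈ Set.Icc (0:ℝ) 1 ∧
    (1 - e) * Ax / (1 + s - e * Ax - (1 - b) * Bx) ∈ Set.Icc (0:ℝ) 1 ∧
    e * Ay / (1 + s - e * By - (1 - e) * Ay) ∈ Set.Icc (0:ℝ) 1 ∧
    (1 - b) * Ay / (1 + s - b * Ay - (1 - b) * By) ∈ Set.Icc (0:ℝ) 1 ∧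
    e * Ay * Ax / ((1 + s) ^ 2 - b * Ay * Bx - e * Ax * By - (1 - b) * Bx * By - (1 - e) * Ax * Ay)
      + (1 - e) * By * Ax / ((1 + s) ^ 2 - b * Ay * Bx - e * Ax * By - (1 - b) * Bx * By - (1 - e) * Ax * Ay)
      ∈ Set.Icc (0:ℝ) 1 ∧
    e * Ay * Ax / ((1 + s) ^ 2 - b * Ay * Bx - e * Ax * By - (1 - b) * Bx * By - (1 - e) * Ax * Ay)
      + (1 - b) * Ay * Bx / ((1 + s) ^ 2 - b * Ay * Bx - e * Ax * By - (1 - b) * Bx * By - (1 - e) * Ax * Ay)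
      ∈ Set.Icc (0:ℝ) 1 := by
  have hT : (0:ℝ) < 1 + s := by linarith
  have hb1' : (0:ℝ) < 1 - b := by linarith
  have he1' : (0:ℝ) < 1 - e := by linarith
  have k1 : e * (1 - b) * (Ax + Bx) = e * (1 - b) * (1 + s) := by rw [hsx]
  have k2 : b * (1 - e) * (Ax + Bx) = b * (1 - e) * (1 + s) := by rw [hsx]
  have k3 : e * (1 - e) * (Ay + By) = e * (1 - e) * (1 + s) := by rw [hsy]
  have k4 : b * (1 - b) * (Ay + By) = b * (1 - b) * (1 + s) := by rw [hsy]
  have hd1 : 0 < 1 + s - b * Bx - (1 - e) * Ax := by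
    linarith [mul_nonneg (mul_nonneg he1'.le hb1'.le) hBx0,
      mul_nonneg (mul_nonneg he0.le hb0.le) hAx0,
      mul_pos (mul_pos he0 hb1') hT, k1]
  have hd2 : 0 < 1 + s - e * Ax - (1 - b) * Bx := by
    linarith [mul_nonneg (mul_nonneg hb1'.le he1'.le) hAx0,
      mul_nonneg (mul_nonneg hb0.le he0.le) hBx0,
      mul_pos (mul_pos hb0 he1') hT, k2]
  have hd3 : 0 < 1 + s - e * By - (1 - e) * Ay := by
    linarith [mul_nonneg (mul_nonneg he0.le he0.le) hAy0,
      mul_nonneg (mul_nonneg he1'.le he1'.le) hBy0,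
      mul_pos (mul_pos he0 he1') hT, k3]
  have hd4 : 0 < 1 + s - b * Ay - (1 - b) * By := by
    linarith [mul_nonneg (mul_nonneg hb1'.le hb1'.le) hAy0,
      mul_nonneg (mul_nonneg hb0.le hb0.le) hBy0,
      mul_pos (mul_pos hb0 hb1') hT, k4]
  have hPpos : 0 < e * Ay + (1 - e) * By := by linarith [hd3, hsy]
  have hQpos : 0 < (1 - b) * Ay + b * By := by linarith [hd4, hsy]
  have hexp : (1 + s) ^ 2 - b * Ay * Bx - e * Ax * By - (1 - b) * Bx * By - (1 - e) * Ax * Ay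
      = Ax * (e * Ay + (1 - e) * By) + Bx * ((1 - b) * Ay + b * By) := by
    linear_combination (-(Ay + By)) * hsx + (-(1 + s)) * hsy
  have hD3 : 0 < (1 + s) ^ 2 - b * Ay * Bx - e * Ax * By - (1 - b) * Bx * By - (1 - e) * Ax * Ay := by
    rw [hexp]
    rcases le_total (e * Ay + (1 - e) * By) ((1 - b) * Ay + b * By) with h | h
    · have k : (e * Ay + (1 - e) * By) * (Ax + Bx) = (e * Ay + (1 - e) * By) * (1 + s) := by
        rw [hsx]
      linarith [mul_nonneg hBx0 (sub_nonneg.2 h), mul_pos hPpos hT, k]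
    · have k : ((1 - b) * Ay + b * By) * (Ax + Bx) = ((1 - b) * Ay + b * By) * (1 + s) := by
        rw [hsx]
      linarith [mul_nonneg hAx0 (sub_nonneg.2 h), mul_pos hQpos hT, k]
  have m1 : e * Ax / (1 + s - b * Bx - (1 - e) * Ax) ∈ Set.Icc (0:ℝ) 1 := by
    rw [Set.mem_Icc]
    refine ⟨div_nonneg (mul_nonneg he0.le hAx0) hd1.le, ?_⟩
    rw [div_le_one hd1]
    linarith [mul_nonneg hb1'.le hBx0, hsx]
  have m2 : (1 - e) * Ax / (1 + s - e * Ax - (1 - b) * Bx) ∈ Set.Icc (0:ℝ) 1 := by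
    rw [Set.mem_Icc]
    refine ⟨div_nonneg (mul_nonneg he1'.le hAx0) hd2.le, ?_⟩
    rw [div_le_one hd2]
    linarith [mul_nonneg hb0.le hBx0, hsx]
  have m3 : e * Ay / (1 + s - e * By - (1 - e) * Ay) ∈ Set.Icc (0:ℝ) 1 := by
    rw [Set.mem_Icc]
    refine ⟨div_nonneg (mul_nonneg he0.le hAy0) hd3.le, ?_⟩
    rw [div_le_one hd3]
    linarith [mul_nonneg he1'.le hBy0, hsy]
  have m4 : (1 - b) * Ay / (1 + s - b * Ay - (1 - b) * By) ∈ Set.Icc (0:ℝ) 1 := by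
    rw [Set.mem_Icc]
    refine ⟨div_nonneg (mul_nonneg hb1'.le hAy0) hd4.le, ?_⟩
    rw [div_le_one hd4]
    linarith [mul_nonneg hb0.le hBy0, hsy]
  have m5 : e * Ay * Ax / ((1 + s) ^ 2 - b * Ay * Bx - e * Ax * By - (1 - b) * Bx * By - (1 - e) * Ax * Ay)
      + (1 - e) * By * Ax / ((1 + s) ^ 2 - b * Ay * Bx - e * Ax * By - (1 - b) * Bx * By - (1 - e) * Ax * Ay)
      ∈ Set.Icc (0:ℝ) 1 := by
    rw [← add_div, Set.mem_Icc]
    refine ⟨div_nonneg (add_nonneg (mul_nonneg (mul_nonneg he0.le hAy0) hAx0)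
      (mul_nonneg (mul_nonneg he1'.le hBy0) hAx0)) hD3.le, ?_⟩
    rw [div_le_one hD3]
    linarith [mul_nonneg (mul_nonneg hb1'.le hAy0) hBx0,
      mul_nonneg (mul_nonneg hb0.le hBx0) hBy0, hexp]
  have m6 : e * Ay * Ax / ((1 + s) ^ 2 - b * Ay * Bx - e * Ax * By - (1 - b) * Bx * By - (1 - e) * Ax * Ay)
      + (1 - b) * Ay * Bx / ((1 + s) ^ 2 - b * Ay * Bx - e * Ax * By - (1 - b) * Bx * By - (1 - e) * Ax * Ay)
      ∈ Set.Icc (0:ℝ) 1 := by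
    rw [← add_div, Set.mem_Icc]
    refine ⟨div_nonneg (add_nonneg (mul_nonneg (mul_nonneg he0.le hAy0) hAx0)
      (mul_nonneg (mul_nonneg hb1'.le hAy0) hBx0)) hD3.le, ?_⟩
    rw [div_le_one hD3]
    linarith [mul_nonneg (mul_nonneg he1'.le hAx0) hBy0,
      mul_nonneg (mul_nonneg hb0.le hBx0) hBy0, hexp]
  exact ⟨hd1, hd2, hd3, hd4, hD3, m1, m2, m3, m4, m5, m6⟩

/-- Well-definedness of the DMPA attachment probabilities on the unit square:
all denominators are strictly positive, each attachment probability lies in `[0,1]`,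
and the mean-field map `F` maps `[0,1]²` into itself. -/
theorem F_maps_unit_square (r p q b e δ : ℝ)
    (hb0 : 0 < b) (hb1 : b < 1) (he0 : 0 < e) (he1 : e < 1)
    (hr0 : 0 ≤ r) (hr1 : r ≤ 1) (hp : 0 ≤ p) (hq : 0 ≤ q) (hpq : p + q ≤ 1)
    (hδ : 0 < δ) :
    ∀ x ∈ Set.Icc (0 : ℝ) 1, ∀ y ∈ Set.Icc (0 : ℝ) 1,
      (0 < 1 + sVal p q δ - b * aB r p q δ x - (1 - e) * aR r p q δ x) ∧
      (0 < 1 + sVal p q δ - e * aR r p q δ x - (1 - b) * aB r p q δ x) ∧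
      (0 < 1 + sVal p q δ - e * aB r p q δ y - (1 - e) * aR r p q δ y) ∧
      (0 < 1 + sVal p q δ - b * aR r p q δ y - (1 - b) * aB r p q δ y) ∧
      (0 < D3 r p q b e δ x y) ∧
      P1RR r p q b e δ x ∈ Set.Icc (0 : ℝ) 1 ∧
      P1BR r p q b e δ x ∈ Set.Icc (0 : ℝ) 1 ∧
      P2RR r p q b e δ y ∈ Set.Icc (0 : ℝ) 1 ∧
      P2BR r p q b e δ y ∈ Set.Icc (0 : ℝ) 1 ∧
      P3RR r p q b e δ x y + P3BR r p q b e δ x y ∈ Set.Icc (0 : ℝ) 1 ∧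
      P3RR r p q b e δ x y + P3RB r p q b e δ x y ∈ Set.Icc (0 : ℝ) 1 ∧
      (F r p q b e δ (x, y)).1 ∈ Set.Icc (0 : ℝ) 1 ∧
      (F r p q b e δ (x, y)).2 ∈ Set.Icc (0 : ℝ) 1 := by
  intro x hx y hy
  obtain ⟨hx0, hx1⟩ := hx
  obtain ⟨hy0, hy1⟩ := hy
  have hs0 : 0 ≤ sVal p q δ := mul_nonneg (by linarith) hδ.le
  have hr1' : (0:ℝ) ≤ 1 - r := by linarith
  have hpq' : (0:ℝ) ≤ 1 - p - q := by linarith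
  have hAx0 : 0 ≤ aR r p q δ x := add_nonneg hx0 (mul_nonneg hr0 hs0)
  have hBx0 : 0 ≤ aB r p q δ x := add_nonneg (by linarith) (mul_nonneg hr1' hs0)
  have hAy0 : 0 ≤ aR r p q δ y := add_nonneg hy0 (mul_nonneg hr0 hs0)
  have hBy0 : 0 ≤ aB r p q δ y := add_nonneg (by linarith) (mul_nonneg hr1' hs0)
  have hsx : aR r p q δ x + aB r p q δ x = 1 + sVal p q δ := by simp only [aR, aB]; ring
  have hsy : aR r p q δ y + aB r p q δ y = 1 + sVal p q δ := by simp only [aR, aB]; ring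
  obtain ⟨hd1, hd2, hd3, hd4, hD3, m1, m2, m3, m4, m5, m6⟩ :=
    dmpa_aux b e (sVal p q δ) (aR r p q δ x) (aB r p q δ x) (aR r p q δ y) (aB r p q δ y)
      hb0 hb1 he0 he1 hs0 hAx0 hBx0 hAy0 hBy0 hsx hsy
  have m1' : P1RR r p q b e δ x ∈ Set.Icc (0:ℝ) 1 := m1
  have m2' : P1BR r p q b e δ x ∈ Set.Icc (0:ℝ) 1 := m2
  have m3' : P2RR r p q b e δ y ∈ Set.Icc (0:ℝ) 1 := m3
  have m4' : P2BR r p q b e δ y ∈ Set.Icc (0:ℝ) 1 := m4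
  have m5' : P3RR r p q b e δ x y + P3BR r p q b e δ x y ∈ Set.Icc (0:ℝ) 1 := m5
  have m6' : P3RR r p q b e δ x y + P3RB r p q b e δ x y ∈ Set.Icc (0:ℝ) 1 := m6
  rw [Set.mem_Icc] at m1' m2' m3' m4' m5' m6'
  have hF1 : (F r p q b e δ (x, y)).1
      = p * (r * P1RR r p q b e δ x + (1 - r) * P1BR r p q b e δ x) + q * r
        + (1 - p - q) * (P3RR r p q b e δ x y + P3BR r p q b e δ x y) := rfl
  have hF2 : (F r p q b e δ (x, y)).2
      = p * r + q * (r * P2RR r p q b e δ y + (1 - r) * P2BR r p q b e δ y)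
        + (1 - p - q) * (P3RR r p q b e δ x y + P3RB r p q b e δ x y) := rfl
  refine ⟨hd1, hd2, hd3, hd4, hD3, m1, m2, m3, m4, m5, m6, ?_, ?_⟩
  · rw [hF1, Set.mem_Icc]
    constructor
    · have c1 : 0 ≤ r * P1RR r p q b e δ x + (1 - r) * P1BR r p q b e δ x :=
        add_nonneg (mul_nonneg hr0 m1'.1) (mul_nonneg hr1' m2'.1)
      exact add_nonneg (add_nonneg (mul_nonneg hp c1) (mul_nonneg hq hr0))
        (mul_nonneg hpq' m5'.1)
    · have c1u : r * P1RR r p q b e δ x + (1 - r) * P1BR r p q b e δ x ≤ 1 := by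
        linarith [mul_nonneg hr0 (sub_nonneg.2 m1'.2), mul_nonneg hr1' (sub_nonneg.2 m2'.2)]
      linarith [mul_nonneg hp (sub_nonneg.2 c1u), mul_nonneg hq hr1',
        mul_nonneg hpq' (sub_nonneg.2 m5'.2)]
  · rw [hF2, Set.mem_Icc]
    constructor
    · have c2 : 0 ≤ r * P2RR r p q b e δ y + (1 - r) * P2BR r p q b e δ y :=
        add_nonneg (mul_nonneg hr0 m3'.1) (mul_nonneg hr1' m4'.1)
      exact add_nonneg (add_nonneg (mul_nonneg hp hr0) (mul_nonneg hq c2))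
        (mul_nonneg hpq' m6'.1)
    · have c2u : r * P2RR r p q b e δ y + (1 - r) * P2BR r p q b e δ y ≤ 1 := by
        linarith [mul_nonneg hr0 (sub_nonneg.2 m3'.2), mul_nonneg hr1' (sub_nonneg.2 m4'.2)]
      linarith [mul_nonneg hp hr1', mul_nonneg hq (sub_nonneg.2 c2u),
        mul_nonneg hpq' (sub_nonneg.2 m6'.2)]
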